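/- Suppose α, β, γ, δ, σ > 0 and γδ > ασ; set a := γδ/σ − α and C := V(δ/α, a/β), and let ȳ be the unique solution y > a/β of V(σ/γ, y) = C. Let (x, y) : [0,∞) → ℝ² be a differentiable solution of ẋ = δ − αx − βxy, ẏ = γxy − σy with x(0) > 0, y(0) > 0 and V(x(0), y(0)) ≤ C. Then y(t) ≤ ȳ for all t ≥ 0. -/

import Mathlib

open Set Filter Topology

/-- Positivity is preserved for a scalar linear-type ODE `z' = c t * z`. -/
lemma pos_of_linODE (z c : ℝ → ℝ)
    (hz : ∀ t, 0 ≤ t → HasDerivAt z (c t * z t) t)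
    (hc : ∀ t, 0 ≤ t → ContinuousAt c t)
    (h0 : 0 < z 0) : ∀ t, 0 ≤ t → 0 < z t := by
  by_contra h
  push_neg at h
  obtain ⟨t₀, ht₀, hzt₀⟩ := h
  have hzc : ContinuousOn z (Icc 0 t₀) := fun s hs =>
    ((hz s hs.1).continuousAt).continuousWithinAt
  have h0mem : (0:ℝ) ∈ Icc (z t₀) (z 0) := ⟨hzt₀, h0.le⟩
  obtain ⟨t₁, ht₁mem, hz₁⟩ := intermediate_value_Icc' ht₀ hzc h0mem
  obtain ⟨ht₁0, ht₁t₀⟩ := ht₁mem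
  set u : ℝ → ℝ := fun s => z (t₁ - s) with hu
  have husub : MapsTo (fun s : ℝ => t₁ - s) (Icc 0 t₁) (Icc 0 t₁) := by
    intro s hs
    obtain ⟨h1, h2⟩ := hs
    show t₁ - s ∈ Icc 0 t₁
    rw [mem_Icc]
    constructor <;> linarith
  have hucont : ContinuousOn u (Icc 0 t₁) := by
    have := (hzc.mono (Icc_subset_Icc le_rfl ht₁t₀)).comp
      ((continuous_const.sub continuous_id).continuousOn) husub
    exact this
  obtain ⟨K, hK⟩ := (isCompact_Icc : IsCompact (Icc (0:ℝ) t₁)).exists_bound_of_continuousOn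
    (fun s hs => (hc s (by linarith [hs.1])).continuousWithinAt)
  have hud : ∀ s ∈ Ico 0 t₁, HasDerivWithinAt u (-(c (t₁ - s) * z (t₁ - s))) (Ici s) s := by
    intro s hs
    have h1 : HasDerivAt (fun s : ℝ => t₁ - s) (-1) s := by
      simpa using (hasDerivAt_id' s).const_sub t₁
    have h2 : HasDerivAt z (c (t₁ - s) * z (t₁ - s)) (t₁ - s) :=
      hz _ (by linarith [hs.2])
    have h3 := h2.comp s h1
    have h4 : HasDerivAt u (c (t₁ - s) * z (t₁ - s) * (-1)) s := h3
    simpa [mul_neg_one] using h4.hasDerivWithinAt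
  have key := norm_le_gronwallBound_of_norm_deriv_right_le (δ := 0) (ε := 0) hucont hud
    (by simp [u, hz₁])
    (fun s hs => by
      have hmem : t₁ - s ∈ Icc 0 t₁ := husub ⟨hs.1, hs.2.le⟩
      calc ‖-(c (t₁ - s) * z (t₁ - s))‖ = ‖c (t₁ - s)‖ * ‖z (t₁ - s)‖ := by
            rw [norm_neg, norm_mul]
        _ ≤ K * ‖u s‖ + 0 := by
            rw [add_zero]
            exact mul_le_mul_of_nonneg_right (hK _ hmem) (norm_nonneg _))
    t₁ (right_mem_Icc.mpr ht₁0)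
  have hz0 : ‖z 0‖ ≤ 0 := by
    simpa [u, gronwallBound_ε0] using key
  have : z 0 = 0 := norm_le_zero_iff.mp hz0
  linarith

/-- Peak estimate: with `a = γδ/σ − α > 0`, `C = V(δ/α, a/β)` and `ȳ` the unique
solution `y > a/β` of `V(σ/γ, y) = C` (where `V(x,y) = γx − σ log x + βy − a log y`),
every positive solution of the damped predator–prey system starting in the trapping
oval `{V ≤ C}` satisfies `y(t) ≤ ȳ` for all `t ≥ 0`. -/
theorem damped_pp_peak_estimate
    (α β γ δ σ a C ybar : ℝ)
    (hα : 0 < α) (hβ : 0 < β) (hγ : 0 < γ) (hδ : 0 < δ) (hσ : 0 < σ)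
    (hR : γ * δ > α * σ) (hadef : a = γ * δ / σ - α)
    (hCdef : C = γ * (δ / α) - σ * Real.log (δ / α) + β * (a / β) - a * Real.log (a / β))
    (hybar_pos : a / β < ybar)
    (hybar_eq : γ * (σ / γ) - σ * Real.log (σ / γ) + β * ybar - a * Real.log ybar = C)
    (hybar_unique : ∀ y : ℝ, a / β < y →
      γ * (σ / γ) - σ * Real.log (σ / γ) + β * y - a * Real.log y = C → y = ybar)
    (x y : ℝ → ℝ)
    (hx : ∀ t, 0 ≤ t → HasDerivAt x (δ - α * x t - β * x t * y t) t)
    (hy : ∀ t, 0 ≤ t → HasDerivAt y (γ * x t * y t - σ * y t) t)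
    (hx0 : 0 < x 0) (hy0 : 0 < y 0)
    (hV0 : γ * x 0 - σ * Real.log (x 0) + β * y 0 - a * Real.log (y 0) ≤ C) :
    ∀ t, 0 ≤ t → y t ≤ ybar := by
  have ha_pos : 0 < a := by
    rw [hadef]
    have : α < γ * δ / σ := (lt_div_iff₀ hσ).mpr (by linarith)
    linarith
  -- positivity of y
  have hypos : ∀ t, 0 ≤ t → 0 < y t := by
    apply pos_of_linODE y (fun t => γ * x t - σ)
    · intro t ht
      have := hy t ht
      convert this using 1
      ring
    · intro t ht
      exact (continuousAt_const.mul (hx t ht).continuousAt).sub continuousAt_const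
    · exact hy0
  -- positivity of x
  have hxpos : ∀ t, 0 ≤ t → 0 < x t := by
    by_contra h
    push_neg at h
    obtain ⟨t₀, ht₀, hxt₀⟩ := h
    -- a globally continuous version of x
    have hxcont : Continuous (fun t : ℝ => x (max t 0)) := by
      rw [continuous_iff_continuousAt]
      intro t
      have h1 : ContinuousAt (fun t : ℝ => max t 0) t :=
        (continuous_id.max continuous_const).continuousAt
      have h2 : ContinuousAt x ((fun t : ℝ => max t 0) t) :=
        (hx (max t 0) (le_max_right _ _)).continuousAt
      exact Filter.Tendsto.comp (by exact h2) h1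
    have hxceq : ∀ t : ℝ, 0 ≤ t → x (max t 0) = x t := fun t ht => by
      rw [max_eq_left ht]
    set S : Set ℝ := Icc 0 t₀ ∩ (fun t : ℝ => x (max t 0)) ⁻¹' (Iic 0) with hS
    have hSne : t₀ ∈ S := ⟨⟨ht₀, le_refl _⟩, by simpa [hxceq t₀ ht₀] using hxt₀⟩
    have hScl : IsClosed S := isClosed_Icc.inter (isClosed_Iic.preimage hxcont)
    have hSbdd : BddBelow S := ⟨0, fun s hs => hs.1.1⟩
    set t₁ := sInf S with ht₁def
    have ht₁S : t₁ ∈ S := hScl.csInf_mem ⟨t₀, hSne⟩ hSbdd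
    have ht₁0 : 0 ≤ t₁ := ht₁S.1.1
    have hxt₁ : x t₁ ≤ 0 := by
      have := ht₁S.2
      simpa [hxceq t₁ ht₁0] using this
    have ht₁pos : 0 < t₁ := by
      rcases lt_or_eq_of_le ht₁0 with h | h
      · exact h
      · exfalso; rw [← h] at hxt₁; linarith
    have hleft : ∀ s, 0 ≤ s → s < t₁ → 0 < x s := by
      intro s hs hst
      by_contra hxs
      push_neg at hxs
      have hsS : s ∈ S := ⟨⟨hs, hst.le.trans ht₁S.1.2⟩, by simpa [hxceq s hs] using hxs⟩
      exact absurd (csInf_le hSbdd hsS) (not_le.mpr hst)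
    have hyt₁ : 0 < y t₁ := hypos t₁ ht₁0
    have hdpos : 0 < δ - α * x t₁ - β * x t₁ * y t₁ := by
      nlinarith [mul_nonneg (mul_nonneg hβ.le (neg_nonneg.mpr hxt₁)) hyt₁.le,
        mul_nonneg hα.le (neg_nonneg.mpr hxt₁)]
    have hslope : Tendsto (slope x t₁) (𝓝[<] t₁) (𝓝 (δ - α * x t₁ - β * x t₁ * y t₁)) := by
      exact (hasDerivAt_iff_tendsto_slope.mp (hx t₁ ht₁0)).mono_left
        (nhdsWithin_mono _ (fun z hz => ne_of_lt hz))
    have hle : δ - α * x t₁ - β * x t₁ * y t₁ ≤ 0 := by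
      refine le_of_tendsto hslope ?_
      filter_upwards [Ioo_mem_nhdsLT_of_mem (⟨ht₁pos, le_refl t₁⟩ : t₁ ∈ Ioc 0 t₁)] with s hs
      rw [slope_def_field]
      have hxs := hleft s hs.1.le hs.2
      apply div_nonpos_of_nonneg_of_nonpos
      · linarith
      · linarith [hs.2]
    linarith
  -- the Lyapunov function
  set W : ℝ → ℝ := fun t => γ * x t - σ * Real.log (x t) + β * y t - a * Real.log (y t)
    with hWdef
  have hWd : ∀ t, 0 ≤ t →
      HasDerivAt W (-(δ * (γ * x t - σ) ^ 2 / (x t * σ))) t := by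
    intro t ht
    have hxt := hxpos t ht
    have hyt := hypos t ht
    have Hx := hx t ht
    have Hy := hy t ht
    have hlx : HasDerivAt (fun s => Real.log (x s))
        ((δ - α * x t - β * x t * y t) / x t) t := Hx.log hxt.ne'
    have hly : HasDerivAt (fun s => Real.log (y s))
        ((γ * x t * y t - σ * y t) / y t) t := Hy.log hyt.ne'
    have H : HasDerivAt W
        (γ * (δ - α * x t - β * x t * y t) - σ * ((δ - α * x t - β * x t * y t) / x t)
          + β * (γ * x t * y t - σ * y t) - a * ((γ * x t * y t - σ * y t) / y t)) t :=
      (((Hx.const_mul γ).sub (hlx.const_mul σ)).add (Hy.const_mul β)).sub (hly.const_mul a)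
    convert H using 1
    rw [hadef]
    field_simp
    ring
  have hWanti : AntitoneOn W (Ici 0) := by
    apply antitoneOn_of_deriv_nonpos (convex_Ici 0)
    · intro t ht
      exact ((hWd t ht).continuousAt).continuousWithinAt
    · intro t ht
      rw [interior_Ici] at ht
      exact ((hWd t ht.le).differentiableAt).differentiableWithinAt
    · intro t ht
      rw [interior_Ici] at ht
      rw [(hWd t ht.le).deriv]
      have h1 : 0 ≤ δ * (γ * x t - σ) ^ 2 / (x t * σ) :=
        div_nonneg (mul_nonneg hδ.le (sq_nonneg _)) (mul_nonneg (hxpos t ht.le).le hσ.le)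
      linarith
  intro t ht
  have hWt : W t ≤ C := le_trans (hWanti (self_mem_Ici) ht ht) hV0
  have hWt' : γ * x t - σ * Real.log (x t) + β * y t - a * Real.log (y t) ≤ C := hWt
  have hxt := hxpos t ht
  have hyt := hypos t ht
  -- the x-part is minimized at σ/γ
  have hfx : γ * (σ / γ) - σ * Real.log (σ / γ) ≤ γ * x t - σ * Real.log (x t) := by
    have h1 : Real.log (γ * x t / σ) ≤ γ * x t / σ - 1 :=
      Real.log_le_sub_one_of_pos (by positivity)
    have h2 : Real.log (γ * x t / σ) = Real.log (x t) - Real.log (σ / γ) := by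
      rw [Real.log_div (by positivity) hσ.ne', Real.log_mul hγ.ne' hxt.ne',
        Real.log_div hσ.ne' hγ.ne']
      ring
    rw [h2] at h1
    have h3 : σ * (Real.log (x t) - Real.log (σ / γ)) ≤ σ * (γ * x t / σ - 1) :=
      mul_le_mul_of_nonneg_left h1 hσ.le
    have h4 : σ * (γ * x t / σ) = γ * x t := by field_simp
    have h5 : γ * (σ / γ) = σ := by field_simp
    rw [mul_sub, mul_sub, h4, mul_one] at h3
    rw [h5]
    linarith
  have hgy : β * y t - a * Real.log (y t) ≤ β * ybar - a * Real.log ybar := by linarith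
  by_contra hlt
  push_neg at hlt
  have habpos : 0 < a / β := div_pos ha_pos hβ
  have hg : StrictMonoOn (fun u => β * u - a * Real.log u) (Ici (a / β)) := by
    apply strictMonoOn_of_deriv_pos (convex_Ici _)
    · intro u hu
      have hu0 : 0 < u := lt_of_lt_of_le habpos hu
      have hd : HasDerivAt (fun u => β * u - a * Real.log u) (β * 1 - a * u⁻¹) u :=
        ((hasDerivAt_id u).const_mul β).sub ((Real.hasDerivAt_log hu0.ne').const_mul a)
      exact hd.continuousAt.continuousWithinAt
    · intro u hu
      rw [interior_Ici] at hu
      have hu0 : 0 < u := habpos.trans hu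
      have hd : HasDerivAt (fun u => β * u - a * Real.log u) (β * 1 - a * u⁻¹) u :=
        ((hasDerivAt_id u).const_mul β).sub ((Real.hasDerivAt_log hu0.ne').const_mul a)
      rw [hd.deriv]
      have h6 : a * u⁻¹ < β := by
        rw [← div_eq_mul_inv, div_lt_iff₀ hu0]
        have := (div_lt_iff₀ hβ).mp hu
        linarith
      linarith
  have := hg (mem_Ici.mpr hybar_pos.le) (mem_Ici.mpr (hybar_pos.trans hlt).le) hlt
  simp only at this
  linarith
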